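/- For every infinite-dimensional real Banach space X and every n < ω, the set H_n(X) of isometry classes of n-dimensional subspaces of X is a connected subset of the Minkowski compact 𝔐_n. -/

import Mathlib

noncomputable section

universe u

/-- A packaged real Banach space. -/
structure BanachSpace : Type (u + 1) where
  carrier : Type u
  [norm : NormedAddCommGroup carrier]
  [smulR : NormedSpace ℝ carrier]
  [complete : CompleteSpace carrier]

attribute [instance] BanachSpace.norm BanachSpace.smulR BanachSpace.complete

/-- A norm on `ℝ^n`. An `n`-dimensional real Banach space is (isometric to) `ℝ^n`
equipped with such a norm. -/
structure MNorm (n : ℕ) : Type where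
  toFun : (Fin n → ℝ) → ℝ
  add_le' : ∀ x y, toFun (x + y) ≤ toFun x + toFun y
  smul_eq' : ∀ (a : ℝ) (x), toFun (a • x) = |a| * toFun x
  eq_zero' : ∀ x, toFun x = 0 → x = 0

/-- Two norms on `ℝ^n` are identified when they are linearly isometrically equivalent. -/
def mnormSetoid (n : ℕ) : Setoid (MNorm n) where
  r N₁ N₂ := ∃ e : (Fin n → ℝ) ≃ₗ[ℝ] (Fin n → ℝ), ∀ x, N₂.toFun (e x) = N₁.toFun x
  iseqv := by
    constructor
    · exact fun N => ⟨LinearEquiv.refl ℝ _, fun x => rfl⟩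
    · rintro N₁ N₂ ⟨e, he⟩
      refine ⟨e.symm, fun x => ?_⟩
      have h := he (e.symm x)
      rw [e.apply_symm_apply] at h
      exact h.symm
    · rintro N₁ N₂ N₃ ⟨e, he⟩ ⟨f, hf⟩
      exact ⟨e.trans f, fun x => by
        rw [LinearEquiv.trans_apply, hf, he]⟩

/-- The Minkowski compact `𝔐_n`: isometry classes of `n`-dimensional real Banach spaces. -/
def Mink (n : ℕ) : Type := Quotient (mnormSetoid n)

/-- The Minkowski space `𝔐`: the disjoint union of the `𝔐_n`. -/
def MinkSpace : Type := Σ n : ℕ, Mink n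

/-- The operator norm of a linear map `u : (ℝ^n, N₁) → (ℝ^n, N₂)`. -/
noncomputable def opC (n : ℕ) (N₁ N₂ : MNorm n)
    (u : (Fin n → ℝ) →ₗ[ℝ] (Fin n → ℝ)) : ℝ :=
  sInf {C : ℝ | 0 ≤ C ∧ ∀ x, N₂.toFun (u x) ≤ C * N₁.toFun x}

/-- The multiplicative Banach–Mazur distance between two norms on `ℝ^n`:
`inf {‖u‖·‖u⁻¹‖ : u a linear isomorphism}`. -/
noncomputable def mDist (n : ℕ) (N₁ N₂ : MNorm n) : ℝ :=
  sInf {c : ℝ | ∃ u : (Fin n → ℝ) ≃ₗ[ℝ] (Fin n → ℝ),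
    c = opC n N₁ N₂ u.toLinearMap * opC n N₂ N₁ u.symm.toLinearMap}

/-- The Banach–Mazur metric `log d` on `𝔐_n`. -/
noncomputable def minkDist (n : ℕ) (P Q : Mink n) : ℝ :=
  Real.log (mDist n P.out Q.out)

/-- The topology of the Banach–Mazur metric on `𝔐_n` (generated by its open balls). -/
instance minkTopology (n : ℕ) : TopologicalSpace (Mink n) :=
  TopologicalSpace.generateFrom
    {s : Set (Mink n) | ∃ (P : Mink n) (ε : ℝ), 0 < ε ∧ s = {Q | minkDist n P Q < ε}}

instance : TopologicalSpace MinkSpace := by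
  unfold MinkSpace; infer_instance

/-- The class in `𝔐` determined by a norm on `ℝ^n`. -/
def minkClass {n : ℕ} (N : MNorm n) : MinkSpace := ⟨n, Quotient.mk (mnormSetoid n) N⟩

/-- `H(X) ⊆ 𝔐`: the set of isometry classes of finite-dimensional subspaces of `X`.
A class `c` belongs to `H(X)` iff `ℝ^{c.1}` with (a representative of) the norm class `c.2`
embeds linearly isometrically into `X`. -/
def HSet (X : Type u) [SeminormedAddCommGroup X] [NormedSpace ℝ X] : Set MinkSpace :=
  {c : MinkSpace | ∃ f : (Fin c.1 → ℝ) →ₗ[ℝ] X, Function.Injective f ∧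
    ∀ v, ‖f v‖ = (Quotient.out c.2).toFun v}

/-- `H_m(X) ⊆ 𝔐_m`: the set of isometry classes of `m`-dimensional subspaces of `X`. -/
def HmSet (m : ℕ) (X : Type u) [SeminormedAddCommGroup X] [NormedSpace ℝ X] : Set (Mink m) :=
  {P : Mink m | ∃ f : (Fin m → ℝ) →ₗ[ℝ] X, Function.Injective f ∧
    ∀ v, ‖f v‖ = (Quotient.out P).toFun v}

namespace BMaux

variable {n : ℕ}

theorem mnorm_ext {N₁ N₂ : MNorm n} (h : N₁.toFun = N₂.toFun) : N₁ = N₂ := by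
  cases N₁; cases N₂; simpa using h

theorem mnorm_zero (N : MNorm n) : N.toFun 0 = 0 := by
  have := N.smul_eq' 0 0
  simpa using this

theorem mnorm_neg (N : MNorm n) (x : Fin n → ℝ) : N.toFun (-x) = N.toFun x := by
  have := N.smul_eq' (-1) x
  simpa using this

theorem mnorm_nonneg (N : MNorm n) (x : Fin n → ℝ) : 0 ≤ N.toFun x := by
  have h1 := N.add_le' x (-x)
  rw [add_neg_cancel, mnorm_zero, mnorm_neg] at h1
  linarith

def mspace (N : MNorm n) := Fin n → ℝ

instance (N : MNorm n) : AddCommGroup (mspace N) := inferInstanceAs (AddCommGroup (Fin n → ℝ))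
instance (N : MNorm n) : Module ℝ (mspace N) := inferInstanceAs (Module ℝ (Fin n → ℝ))

noncomputable instance (N : MNorm n) : NormedAddCommGroup (mspace N) :=
  AddGroupNorm.toNormedAddCommGroup
    { toFun := N.toFun
      map_zero' := mnorm_zero N
      add_le' := N.add_le'
      neg' := mnorm_neg N
      eq_zero_of_map_eq_zero' := N.eq_zero' }

theorem norm_space (N : MNorm n) (x : mspace N) : ‖x‖ = N.toFun x := rfl

instance (N : MNorm n) : NormedSpace ℝ (mspace N) :=
  { (inferInstance : Module ℝ (mspace N)) with
    norm_smul_le := fun a x => by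
      rw [norm_space, norm_space]
      change N.toFun (a • (x : Fin n → ℝ)) ≤ _
      exact le_of_eq ((N.smul_eq' a x).trans (by rw [Real.norm_eq_abs])) }

instance (N : MNorm n) : FiniteDimensional ℝ (mspace N) :=
  inferInstanceAs (FiniteDimensional ℝ (Fin n → ℝ))

def toSpace (N : MNorm n) : (Fin n → ℝ) →ₗ[ℝ] mspace N :=
  { toFun := fun x => x, map_add' := fun _ _ => rfl, map_smul' := fun _ _ => rfl }

def fromSpace (N : MNorm n) : mspace N →ₗ[ℝ] (Fin n → ℝ) :=
  { toFun := fun x => x, map_add' := fun _ _ => rfl, map_smul' := fun _ _ => rfl }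

theorem exists_upper (N : MNorm n) : ∃ b : ℝ, 0 < b ∧ ∀ x, N.toFun x ≤ b * ‖x‖ := by
  let u := LinearMap.toContinuousLinearMap (toSpace N)
  refine ⟨‖u‖ + 1, by positivity, fun x => ?_⟩
  have h := u.le_opNorm x
  have h2 : N.toFun x = ‖u x‖ := rfl
  nlinarith [norm_nonneg x]

theorem exists_lower (N : MNorm n) : ∃ a : ℝ, 0 < a ∧ ∀ x, ‖x‖ ≤ a * N.toFun x := by
  let v := LinearMap.toContinuousLinearMap (fromSpace N)
  refine ⟨‖v‖ + 1, by positivity, fun x => ?_⟩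
  have h := v.le_opNorm (show mspace N from x)
  rw [norm_space] at h
  have h2 : ‖v (show mspace N from x)‖ = ‖x‖ := rfl
  nlinarith [mnorm_nonneg N x]

end BMaux
namespace BMaux

variable {n : ℕ}

theorem opSet_nonempty (N₁ N₂ : MNorm n) (u : (Fin n → ℝ) →ₗ[ℝ] (Fin n → ℝ)) :
    ∃ C : ℝ, 0 ≤ C ∧ ∀ x, N₂.toFun (u x) ≤ C * N₁.toFun x := by
  obtain ⟨b, hb, hbb⟩ := exists_upper N₂
  obtain ⟨a, ha, haa⟩ := exists_lower N₁
  let w := LinearMap.toContinuousLinearMap u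
  refine ⟨b * ‖w‖ * a, by positivity, fun x => ?_⟩
  have h2 : ‖u x‖ ≤ ‖w‖ * ‖x‖ := w.le_opNorm x
  calc N₂.toFun (u x) ≤ b * ‖u x‖ := hbb _
    _ ≤ b * (‖w‖ * ‖x‖) := by gcongr
    _ ≤ b * (‖w‖ * (a * N₁.toFun x)) := by
        have := haa x
        gcongr
    _ = b * ‖w‖ * a * N₁.toFun x := by ring

theorem opC_nonneg {N₁ N₂ : MNorm n} {u : (Fin n → ℝ) →ₗ[ℝ] (Fin n → ℝ)} :
    0 ≤ opC n N₁ N₂ u :=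
  Real.sInf_nonneg fun _ hC => hC.1

theorem opC_le {N₁ N₂ : MNorm n} {u : (Fin n → ℝ) →ₗ[ℝ] (Fin n → ℝ)} {C : ℝ}
    (hC0 : 0 ≤ C) (hC : ∀ x, N₂.toFun (u x) ≤ C * N₁.toFun x) : opC n N₁ N₂ u ≤ C :=
  csInf_le ⟨0, fun _ hy => hy.1⟩ ⟨hC0, hC⟩

theorem mnorm_pos {N : MNorm n} {x : Fin n → ℝ} (hx : x ≠ 0) : 0 < N.toFun x := by
  rcases lt_or_eq_of_le (mnorm_nonneg N x) with h | h
  · exact h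
  · exact absurd (N.eq_zero' x h.symm) hx

theorem opC_spec (N₁ N₂ : MNorm n) (u : (Fin n → ℝ) →ₗ[ℝ] (Fin n → ℝ)) (x : Fin n → ℝ) :
    N₂.toFun (u x) ≤ opC n N₁ N₂ u * N₁.toFun x := by
  by_cases hx : x = 0
  · subst hx
    rw [map_zero, mnorm_zero, mnorm_zero, mul_zero]
  · have hx' : 0 < N₁.toFun x := mnorm_pos hx
    have key : N₂.toFun (u x) / N₁.toFun x ≤ opC n N₁ N₂ u := by
      apply le_csInf (opSet_nonempty N₁ N₂ u)
      rintro C ⟨hC0, hC⟩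
      rw [div_le_iff₀ hx']
      exact hC x
    calc N₂.toFun (u x) = N₂.toFun (u x) / N₁.toFun x * N₁.toFun x := by field_simp
      _ ≤ opC n N₁ N₂ u * N₁.toFun x := mul_le_mul_of_nonneg_right key hx'.le

theorem opC_comp (N₁ N₂ N₃ : MNorm n) (u v : (Fin n → ℝ) →ₗ[ℝ] (Fin n → ℝ)) :
    opC n N₁ N₃ (v ∘ₗ u) ≤ opC n N₂ N₃ v * opC n N₁ N₂ u := by
  apply opC_le (mul_nonneg opC_nonneg opC_nonneg)
  intro x
  rw [LinearMap.comp_apply]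
  calc N₃.toFun (v (u x)) ≤ opC n N₂ N₃ v * N₂.toFun (u x) := opC_spec N₂ N₃ v (u x)
    _ ≤ opC n N₂ N₃ v * (opC n N₁ N₂ u * N₁.toFun x) := by
        have := opC_spec N₁ N₂ u x
        have h0 : (0:ℝ) ≤ opC n N₂ N₃ v := opC_nonneg
        exact mul_le_mul_of_nonneg_left this h0
    _ = opC n N₂ N₃ v * opC n N₁ N₂ u * N₁.toFun x := by ring

theorem mdist_set_nonempty (N₁ N₂ : MNorm n) :
    Set.Nonempty {c : ℝ | ∃ u : (Fin n → ℝ) ≃ₗ[ℝ] (Fin n → ℝ),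
      c = opC n N₁ N₂ u.toLinearMap * opC n N₂ N₁ u.symm.toLinearMap} :=
  ⟨_, ⟨LinearEquiv.refl ℝ _, rfl⟩⟩

theorem mDist_le (N₁ N₂ : MNorm n) (u : (Fin n → ℝ) ≃ₗ[ℝ] (Fin n → ℝ)) :
    mDist n N₁ N₂ ≤ opC n N₁ N₂ u.toLinearMap * opC n N₂ N₁ u.symm.toLinearMap :=
  csInf_le ⟨0, by rintro c ⟨w, rfl⟩; exact mul_nonneg opC_nonneg opC_nonneg⟩ ⟨u, rfl⟩

theorem one_le_opC_pair (hn : 0 < n) (N₁ N₂ : MNorm n) (u : (Fin n → ℝ) ≃ₗ[ℝ] (Fin n → ℝ)) :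
    1 ≤ opC n N₁ N₂ u.toLinearMap * opC n N₂ N₁ u.symm.toLinearMap := by
  set x : Fin n → ℝ := Pi.single ⟨0, hn⟩ 1 with hxdef
  have hx : x ≠ 0 := by
    intro h
    have := congrFun h ⟨0, hn⟩
    simp [hxdef] at this
  have hN : 0 < N₁.toFun x := mnorm_pos hx
  have h1 : N₁.toFun x ≤ opC n N₂ N₁ u.symm.toLinearMap * N₂.toFun (u x) := by
    have h := opC_spec N₂ N₁ u.symm.toLinearMap (u x)
    simpa using h
  have h2 : N₂.toFun (u x) ≤ opC n N₁ N₂ u.toLinearMap * N₁.toFun x := opC_spec N₁ N₂ _ x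
  have h3 : (0:ℝ) ≤ opC n N₂ N₁ u.symm.toLinearMap := opC_nonneg
  nlinarith

theorem one_le_mDist (hn : 0 < n) (N₁ N₂ : MNorm n) : 1 ≤ mDist n N₁ N₂ := by
  apply le_csInf (mdist_set_nonempty _ _)
  rintro c ⟨u, rfl⟩
  exact one_le_opC_pair hn N₁ N₂ u

theorem mDist_pos (hn : 0 < n) (N₁ N₂ : MNorm n) : 0 < mDist n N₁ N₂ :=
  lt_of_lt_of_le one_pos (one_le_mDist hn N₁ N₂)

theorem mDist_triangle (hn : 0 < n) (N₁ N₂ N₃ : MNorm n) :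
    mDist n N₁ N₃ ≤ mDist n N₁ N₂ * mDist n N₂ N₃ := by
  have key : ∀ u v : (Fin n → ℝ) ≃ₗ[ℝ] (Fin n → ℝ),
      mDist n N₁ N₃ ≤ (opC n N₁ N₂ u.toLinearMap * opC n N₂ N₁ u.symm.toLinearMap) *
        (opC n N₂ N₃ v.toLinearMap * opC n N₃ N₂ v.symm.toLinearMap) := by
    intro u v
    have h1 := mDist_le N₁ N₃ (u.trans v)
    have h2 : (u.trans v).toLinearMap = v.toLinearMap ∘ₗ u.toLinearMap := rfl
    have h3 : (u.trans v).symm.toLinearMap = u.symm.toLinearMap ∘ₗ v.symm.toLinearMap := rfl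
    rw [h2, h3] at h1
    have h4 := opC_comp N₁ N₂ N₃ u.toLinearMap v.toLinearMap
    have h5 := opC_comp N₃ N₂ N₁ v.symm.toLinearMap u.symm.toLinearMap
    calc mDist n N₁ N₃ ≤ _ := h1
      _ ≤ (opC n N₂ N₃ v.toLinearMap * opC n N₁ N₂ u.toLinearMap) *
          (opC n N₂ N₁ u.symm.toLinearMap * opC n N₃ N₂ v.symm.toLinearMap) :=
        mul_le_mul h4 h5 opC_nonneg (mul_nonneg opC_nonneg opC_nonneg)
      _ = _ := by ring
  have h23pos : 0 < mDist n N₂ N₃ := mDist_pos hn N₂ N₃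
  have step1 : ∀ u : (Fin n → ℝ) ≃ₗ[ℝ] (Fin n → ℝ),
      mDist n N₁ N₃ ≤ (opC n N₁ N₂ u.toLinearMap * opC n N₂ N₁ u.symm.toLinearMap) *
        mDist n N₂ N₃ := by
    intro u
    have hupos : 0 < opC n N₁ N₂ u.toLinearMap * opC n N₂ N₁ u.symm.toLinearMap :=
      lt_of_lt_of_le one_pos (one_le_opC_pair hn N₁ N₂ u)
    rw [← div_le_iff₀' hupos]
    apply le_csInf (mdist_set_nonempty _ _)
    rintro c ⟨v, rfl⟩
    rw [div_le_iff₀' hupos]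
    exact key u v
  rw [← div_le_iff₀ h23pos]
  apply le_csInf (mdist_set_nonempty _ _)
  rintro c ⟨u, rfl⟩
  rw [div_le_iff₀ h23pos]
  exact step1 u

theorem mdist_set_subset {A B B' : MNorm n} (h : (mnormSetoid n).r B B') :
    {c : ℝ | ∃ u : (Fin n → ℝ) ≃ₗ[ℝ] (Fin n → ℝ),
      c = opC n A B u.toLinearMap * opC n B A u.symm.toLinearMap} ⊆
    {c : ℝ | ∃ u : (Fin n → ℝ) ≃ₗ[ℝ] (Fin n → ℝ),
      c = opC n A B' u.toLinearMap * opC n B' A u.symm.toLinearMap} := by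
  obtain ⟨e, he⟩ := h
  rintro c ⟨u, rfl⟩
  refine ⟨u.trans e, ?_⟩
  have happ : ∀ x, (u.trans e).toLinearMap x = e (u x) := fun _ => rfl
  have happ2 : ∀ x, (u.trans e).symm.toLinearMap x = u.symm (e.symm x) := fun _ => rfl
  have h1 : opC n A B' (u.trans e).toLinearMap = opC n A B u.toLinearMap := by
    unfold opC
    congr 1
    ext C
    constructor
    · rintro ⟨hC0, hC⟩
      exact ⟨hC0, fun x => by have := hC x; rwa [happ, he] at this⟩
    · rintro ⟨hC0, hC⟩
      exact ⟨hC0, fun x => by rw [happ, he]; exact hC x⟩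
  have h2 : opC n B' A (u.trans e).symm.toLinearMap = opC n B A u.symm.toLinearMap := by
    unfold opC
    congr 1
    ext C
    constructor
    · rintro ⟨hC0, hC⟩
      refine ⟨hC0, fun x => ?_⟩
      have := hC (e x)
      rwa [happ2, e.symm_apply_apply, he] at this
    · rintro ⟨hC0, hC⟩
      refine ⟨hC0, fun x => ?_⟩
      have := hC (e.symm x)
      rw [happ2]
      rwa [← he (e.symm x), e.apply_symm_apply] at this
  rw [h1, h2]

theorem mDist_congr_right {A B B' : MNorm n} (h : (mnormSetoid n).r B B') :
    mDist n A B = mDist n A B' := by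
  unfold mDist
  congr 1
  exact Set.Subset.antisymm (mdist_set_subset h) (mdist_set_subset ((mnormSetoid n).symm h))

end BMaux
namespace BMaux

variable {n : ℕ} {X : Type u} [NormedAddCommGroup X] [NormedSpace ℝ X]

def embNorm (f : (Fin n → ℝ) →ₗ[ℝ] X) (hf : Function.Injective f) : MNorm n where
  toFun v := ‖f v‖
  add_le' x y := by
    show ‖f (x + y)‖ ≤ ‖f x‖ + ‖f y‖
    rw [map_add]; exact norm_add_le _ _
  smul_eq' a x := by
    show ‖f (a • x)‖ = |a| * ‖f x‖
    rw [map_smul, norm_smul, Real.norm_eq_abs]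
  eq_zero' x h := by
    rw [norm_eq_zero] at h
    exact hf (by rw [h, map_zero])

theorem mem_HmSet (f : (Fin n → ℝ) →ₗ[ℝ] X) (hf : Function.Injective f) :
    (Quotient.mk (mnormSetoid n) (embNorm f hf)) ∈ HmSet n X := by
  obtain ⟨e, he⟩ := Quotient.mk_out (s := mnormSetoid n) (embNorm f hf)
  refine ⟨f ∘ₗ e.toLinearMap, hf.comp e.injective, fun v => ?_⟩
  exact he v

theorem hmset_rep {P : Mink n} (f : (Fin n → ℝ) →ₗ[ℝ] X) (hf : Function.Injective f)
    (hiso : ∀ v, ‖f v‖ = (Quotient.out P).toFun v) :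
    P = Quotient.mk (mnormSetoid n) (embNorm f hf) := by
  have h : (Quotient.out P : MNorm n) = embNorm f hf :=
    mnorm_ext (funext fun v => (hiso v).symm)
  conv_lhs => rw [← Quotient.out_eq P]
  rw [h]

theorem exists_indep {Y : Type u} [AddCommGroup Y] [Module ℝ Y]
    (hinf : ¬ FiniteDimensional ℝ Y) (W : Submodule ℝ Y) (hW : FiniteDimensional ℝ W)
    (m : ℕ) :
    ∃ v : Fin m → Y, LinearIndependent ℝ v ∧
      ∀ z ∈ Submodule.span ℝ (Set.range v), z ∈ W → z = 0 := by
  induction m with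
  | zero =>
      refine ⟨fun _ => 0, linearIndependent_empty_type, fun z hz _ => ?_⟩
      rw [Set.range_eq_empty, Submodule.span_empty, Submodule.mem_bot] at hz
      exact hz
  | succ m ih =>
      obtain ⟨v, hv, hdisj⟩ := ih
      have hfin : FiniteDimensional ℝ (Submodule.span ℝ (Set.range v)) :=
        FiniteDimensional.span_of_finite ℝ (Set.finite_range v)
      set U := W ⊔ Submodule.span ℝ (Set.range v) with hU
      have hUfd : FiniteDimensional ℝ U := Submodule.finiteDimensional_sup _ _
      have hUne : U ≠ ⊤ := by
        intro htop
        apply hinf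
        have h1 : FiniteDimensional ℝ (⊤ : Submodule ℝ Y) := htop ▸ hUfd
        exact Module.Finite.equiv (Submodule.topEquiv (R := ℝ) (M := Y))
      obtain ⟨x, hx⟩ : ∃ x, x ∉ U := by
        by_contra hc
        push_neg at hc
        exact hUne (Submodule.eq_top_iff'.mpr hc)
      refine ⟨Fin.cons x v, ?_, ?_⟩
      · rw [linearIndependent_fin_cons]
        exact ⟨hv, fun hmem => hx (Submodule.mem_sup_right hmem)⟩
      · intro z hz hzW
        rw [Fin.range_cons, Submodule.span_insert] at hz
        obtain ⟨y, hy, w, hw, rfl⟩ := Submodule.mem_sup.mp hz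
        obtain ⟨c, rfl⟩ := Submodule.mem_span_singleton.mp hy
        by_cases hc : c = 0
        · subst hc
          rw [zero_smul, zero_add] at hzW ⊢
          exact hdisj w hw hzW
        · exfalso
          apply hx
          have hxw : c • x = (c • x + w) - w := (add_sub_cancel_right _ w).symm
          have hmem : c • x ∈ U := by
            rw [hxw]
            exact Submodule.sub_mem U (Submodule.mem_sup_left hzW)
              (Submodule.mem_sup_right hw)
          have := Submodule.smul_mem U c⁻¹ hmem
          rwa [smul_smul, inv_mul_cancel₀ hc, one_smul] at this
      
def liftMap {Y : Type u} [AddCommGroup Y] [Module ℝ Y] (v : Fin n → Y) :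
    (Fin n → ℝ) →ₗ[ℝ] Y where
  toFun c := ∑ i, c i • v i
  map_add' a b := by
    simp [add_smul, Finset.sum_add_distrib]
  map_smul' r a := by
    simp [smul_smul, Finset.smul_sum]

theorem liftMap_inj {Y : Type u} [AddCommGroup Y] [Module ℝ Y] {v : Fin n → Y}
    (hv : LinearIndependent ℝ v) : Function.Injective (liftMap v) := by
  intro a b hab
  have hsub : liftMap v (a - b) = 0 := by rw [map_sub, hab, sub_self]
  have hsum : ∑ i ∈ Finset.univ, (a - b) i • v i = 0 := hsub
  have := linearIndependent_iff'.mp hv Finset.univ (a - b) hsum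
  funext i
  have hi := this i (Finset.mem_univ i)
  have : a i - b i = 0 := hi
  linarith

theorem liftMap_mem_span {Y : Type u} [AddCommGroup Y] [Module ℝ Y] (v : Fin n → Y)
    (c : Fin n → ℝ) : liftMap v c ∈ Submodule.span ℝ (Set.range v) := by
  show ∑ i, c i • v i ∈ _
  apply Submodule.sum_mem
  intro i _
  exact Submodule.smul_mem _ _ (Submodule.subset_span (Set.mem_range_self i))

end BMaux
namespace BMaux

variable {n : ℕ} {X : Type u} [NormedAddCommGroup X] [NormedSpace ℝ X]

def pathMap (f h : (Fin n → ℝ) →ₗ[ℝ] X)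
    (hseg : ∀ t : ℝ, t ∈ Set.Icc (0:ℝ) 1 → Function.Injective ((1-t) • f + t • h)) :
    Set.Icc (0:ℝ) 1 → Mink n := fun t =>
  Quotient.mk (mnormSetoid n) (embNorm ((1-(t:ℝ)) • f + (t:ℝ) • h) (hseg t t.2))

set_option maxHeartbeats 1000000 in
theorem pathMap_cont (hn : 0 < n) (f h : (Fin n → ℝ) →ₗ[ℝ] X)
    (hseg : ∀ t : ℝ, t ∈ Set.Icc (0:ℝ) 1 → Function.Injective ((1-t) • f + t • h)) :
    Continuous (pathMap f h hseg) := by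
  apply continuous_generateFrom_iff.mpr
  rintro s ⟨P₀, ε, hε, rfl⟩
  rw [Metric.isOpen_iff]
  rintro t₀ ht₀
  simp only [Set.mem_preimage, Set.mem_setOf_eq] at ht₀
  set N₀ := embNorm ((1-(t₀:ℝ)) • f + (t₀:ℝ) • h) (hseg t₀ t₀.2) with hN₀
  have hmd0 : mDist n (Quotient.out P₀) (Quotient.out (pathMap f h hseg t₀)) =
      mDist n (Quotient.out P₀) N₀ :=
    mDist_congr_right (Quotient.mk_out N₀)
  set m₀ := mDist n (Quotient.out P₀) N₀ with hm₀
  have hm₀1 : 1 ≤ m₀ := one_le_mDist hn _ _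
  have hexp : 0 < Real.exp ε := Real.exp_pos ε
  have hm₀lt : m₀ < Real.exp ε := by
    have hmink : minkDist n P₀ (pathMap f h hseg t₀) = Real.log m₀ := by
      unfold minkDist
      rw [hmd0]
    rw [hmink] at ht₀
    exact (Real.log_lt_iff_lt_exp (by linarith)).mp ht₀
  obtain ⟨a, ha, haa⟩ := exists_lower N₀
  set fc := LinearMap.toContinuousLinearMap f with hfc
  set hc := LinearMap.toContinuousLinearMap h with hhc
  set K := (‖fc‖ + ‖hc‖) * a with hK
  have hK0 : 0 ≤ K := by positivity
  have hKb : ∀ x, ‖f x‖ + ‖h x‖ ≤ K * N₀.toFun x := by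
    intro x
    have h1 : ‖f x‖ ≤ ‖fc‖ * ‖x‖ := fc.le_opNorm x
    have h2 : ‖h x‖ ≤ ‖hc‖ * ‖x‖ := hc.le_opNorm x
    have h3 := haa x
    have h4 := mnorm_nonneg N₀ x
    nlinarith [norm_nonneg fc, norm_nonneg hc, norm_nonneg x,
      mul_le_mul_of_nonneg_left h3 (add_nonneg (norm_nonneg fc) (norm_nonneg hc))]
  set δ₀ := (Real.exp ε - m₀) / (Real.exp ε + m₀) with hδ₀
  have hδ₀pos : 0 < δ₀ := div_pos (by linarith) (by linarith)
  have hδ₀lt1 : δ₀ < 1 := by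
    rw [div_lt_one (by linarith)]; linarith
  have hδ₀eq : δ₀ * (Real.exp ε + m₀) = Real.exp ε - m₀ := by
    rw [hδ₀, div_mul_cancel₀]
    linarith
  refine ⟨δ₀ / (2 * (K + 1)), div_pos hδ₀pos (by linarith), ?_⟩
  intro t ht
  simp only [Metric.mem_ball] at ht
  have hdist : |(t:ℝ) - (t₀:ℝ)| < δ₀ / (2 * (K + 1)) := by
    rw [Subtype.dist_eq, Real.dist_eq] at ht; exact ht
  set δ' := |(t:ℝ) - (t₀:ℝ)| * K with hδ'
  have hδ'0 : 0 ≤ δ' := mul_nonneg (abs_nonneg _) hK0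
  have hδ'lt : δ' < δ₀ := by
    have h1 : |(t:ℝ) - (t₀:ℝ)| * K ≤ (δ₀ / (2 * (K + 1))) * K :=
      mul_le_mul_of_nonneg_right hdist.le hK0
    have h2 : (δ₀ / (2 * (K + 1))) * K < δ₀ := by
      rw [div_mul_eq_mul_div, div_lt_iff₀ (by linarith : (0:ℝ) < 2 * (K + 1))]
      nlinarith
    linarith
  have h1δ : 0 < 1 - δ' := by linarith
  set Nt := embNorm ((1-(t:ℝ)) • f + (t:ℝ) • h) (hseg t t.2) with hNt
  have hdiff : ∀ x, ‖((1-(t:ℝ)) • f + (t:ℝ) • h) x - ((1-(t₀:ℝ)) • f + (t₀:ℝ) • h) x‖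
      ≤ δ' * N₀.toFun x := by
    intro x
    have heq : ((1-(t:ℝ)) • f + (t:ℝ) • h) x - ((1-(t₀:ℝ)) • f + (t₀:ℝ) • h) x
        = ((t:ℝ) - (t₀:ℝ)) • (h x - f x) := by
      simp only [LinearMap.add_apply, LinearMap.smul_apply]
      module
    rw [heq, norm_smul, Real.norm_eq_abs]
    have h5 : ‖h x - f x‖ ≤ ‖h x‖ + ‖f x‖ := norm_sub_le _ _
    have h6 := hKb x
    calc |(t:ℝ) - (t₀:ℝ)| * ‖h x - f x‖ ≤ |(t:ℝ) - (t₀:ℝ)| * (K * N₀.toFun x) := by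
          apply mul_le_mul_of_nonneg_left _ (abs_nonneg _)
          linarith
      _ = δ' * N₀.toFun x := by rw [hδ']; ring
  have hcomp1 : ∀ x, Nt.toFun x ≤ (1 + δ') * N₀.toFun x := by
    intro x
    have e1 : Nt.toFun x = ‖((1-(t:ℝ)) • f + (t:ℝ) • h) x‖ := rfl
    have e2 : N₀.toFun x = ‖((1-(t₀:ℝ)) • f + (t₀:ℝ) • h) x‖ := rfl
    have h1 : ‖((1-(t:ℝ)) • f + (t:ℝ) • h) x‖ ≤ ‖((1-(t₀:ℝ)) • f + (t₀:ℝ) • h) x‖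
        + ‖((1-(t:ℝ)) • f + (t:ℝ) • h) x - ((1-(t₀:ℝ)) • f + (t₀:ℝ) • h) x‖ :=
      norm_le_insert' _ _
    have h2 := hdiff x
    rw [e1, e2]
    rw [e2] at h2
    linarith
  have hcomp2 : ∀ x, N₀.toFun x ≤ (1 - δ')⁻¹ * Nt.toFun x := by
    intro x
    have e1 : Nt.toFun x = ‖((1-(t:ℝ)) • f + (t:ℝ) • h) x‖ := rfl
    have e2 : N₀.toFun x = ‖((1-(t₀:ℝ)) • f + (t₀:ℝ) • h) x‖ := rfl
    have h1 : ‖((1-(t₀:ℝ)) • f + (t₀:ℝ) • h) x‖ ≤ ‖((1-(t:ℝ)) • f + (t:ℝ) • h) x‖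
        + ‖((1-(t:ℝ)) • f + (t:ℝ) • h) x - ((1-(t₀:ℝ)) • f + (t₀:ℝ) • h) x‖ :=
      norm_le_insert _ _
    have h2 := hdiff x
    have key : (1 - δ') * N₀.toFun x ≤ Nt.toFun x := by
      rw [e1, e2] at *
      nlinarith
    have := mul_le_mul_of_nonneg_left key (le_of_lt (inv_pos.mpr h1δ))
    rwa [← mul_assoc, inv_mul_cancel₀ (ne_of_gt h1δ), one_mul] at this
  have hop1 : opC n N₀ Nt LinearMap.id ≤ 1 + δ' :=
    opC_le (by linarith) (fun x => hcomp1 x)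
  have hop2 : opC n Nt N₀ LinearMap.id ≤ (1 - δ')⁻¹ :=
    opC_le (le_of_lt (inv_pos.mpr h1δ)) (fun x => hcomp2 x)
  have hmdNt : mDist n N₀ Nt ≤ (1 + δ') * (1 - δ')⁻¹ := by
    have hle := mDist_le N₀ Nt (LinearEquiv.refl ℝ _)
    have hrefl1 : (LinearEquiv.refl ℝ (Fin n → ℝ)).toLinearMap = LinearMap.id := rfl
    have hrefl2 : (LinearEquiv.refl ℝ (Fin n → ℝ)).symm.toLinearMap = LinearMap.id := rfl
    rw [hrefl1, hrefl2] at hle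
    calc mDist n N₀ Nt ≤ _ := hle
      _ ≤ (1 + δ') * (1 - δ')⁻¹ :=
        mul_le_mul hop1 hop2 opC_nonneg (by linarith)
  have hmt : mDist n (Quotient.out P₀) Nt < Real.exp ε := by
    have h2 : mDist n (Quotient.out P₀) Nt ≤ m₀ * ((1 + δ') * (1 - δ')⁻¹) :=
      le_trans (mDist_triangle hn _ N₀ Nt) (mul_le_mul_of_nonneg_left hmdNt (by linarith))
    have h3 : m₀ * ((1 + δ') * (1 - δ')⁻¹) < Real.exp ε := by
      rw [← div_eq_mul_inv, ← mul_div_assoc, div_lt_iff₀ h1δ]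
      nlinarith
    linarith
  show t ∈ pathMap f h hseg ⁻¹' {Q | minkDist n P₀ Q < ε}
  simp only [Set.mem_preimage, Set.mem_setOf_eq]
  have hfin : minkDist n P₀ (pathMap f h hseg t) =
      Real.log (mDist n (Quotient.out P₀) Nt) := by
    have h9 : mDist n (Quotient.out P₀) (Quotient.out (pathMap f h hseg t)) =
        mDist n (Quotient.out P₀) Nt := mDist_congr_right (Quotient.mk_out Nt)
    unfold minkDist
    rw [h9]
  rw [hfin]
  exact (Real.log_lt_iff_lt_exp (lt_of_lt_of_le one_pos (one_le_mDist hn _ _))).mpr hmt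

theorem path_lemma (hn : 0 < n) (f h : (Fin n → ℝ) →ₗ[ℝ] X)
    (hf : Function.Injective f) (hh : Function.Injective h)
    (hseg : ∀ t : ℝ, t ∈ Set.Icc (0:ℝ) 1 → Function.Injective ((1-t) • f + t • h)) :
    ∃ s : Set (Mink n), s ⊆ HmSet n X ∧
      Quotient.mk (mnormSetoid n) (embNorm f hf) ∈ s ∧
      Quotient.mk (mnormSetoid n) (embNorm h hh) ∈ s ∧ IsPreconnected s := by
  haveI : PreconnectedSpace (Set.Icc (0:ℝ) 1) := Subtype.preconnectedSpace isPreconnected_Icc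
  refine ⟨Set.range (pathMap f h hseg), ?_, ?_, ?_,
    isPreconnected_range (pathMap_cont hn f h hseg)⟩
  · rintro _ ⟨t, rfl⟩
    exact mem_HmSet _ _
  · refine ⟨⟨0, by norm_num⟩, ?_⟩
    have he : embNorm ((1-((0:ℝ))) • f + ((0:ℝ)) • h)
        (hseg 0 (Set.mem_Icc.mpr ⟨le_refl _, zero_le_one⟩)) = embNorm f hf := by
      apply mnorm_ext
      funext v
      show ‖((1-(0:ℝ)) • f + (0:ℝ) • h) v‖ = ‖f v‖
      simp
    show Quotient.mk (mnormSetoid n) _ = _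
    rw [he]
  · refine ⟨⟨1, by norm_num⟩, ?_⟩
    have he : embNorm ((1-((1:ℝ))) • f + ((1:ℝ)) • h)
        (hseg 1 (Set.mem_Icc.mpr ⟨zero_le_one, le_refl _⟩)) = embNorm h hh := by
      apply mnorm_ext
      funext v
      show ‖((1-(1:ℝ)) • f + (1:ℝ) • h) v‖ = ‖h v‖
      simp
    show Quotient.mk (mnormSetoid n) _ = _
    rw [he]

end BMaux
/-- For every infinite-dimensional real Banach space `X` and every `n`,
the set `H_n(X)` of isometry classes of `n`-dimensional subspaces of `X` is a connected
subset of the Minkowski compact `𝔐_n`. -/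
theorem HmSet_isConnected_of_infiniteDimensional
    (X : Type u) [NormedAddCommGroup X] [NormedSpace ℝ X] [CompleteSpace X]
    (hinf : ¬ FiniteDimensional ℝ X) (n : ℕ) :
    IsConnected (HmSet n X) := by
  classical
  rcases Nat.eq_zero_or_pos n with hn | hn
  · subst hn
    constructor
    · exact ⟨_, BMaux.mem_HmSet (0 : (Fin 0 → ℝ) →ₗ[ℝ] X)
        (Function.injective_of_subsingleton _)⟩
    · apply Set.Subsingleton.isPreconnected
      intro P _ Q _
      have : ∀ R : Mink 0, R = Quotient.mk (mnormSetoid 0) (Quotient.out R) :=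
        fun R => (Quotient.out_eq R).symm
      rw [this P, this Q]
      apply Quotient.sound
      refine ⟨LinearEquiv.refl ℝ _, fun x => ?_⟩
      have hx : x = 0 := Subsingleton.elim x 0
      subst hx
      rw [BMaux.mnorm_zero, LinearEquiv.refl_apply, BMaux.mnorm_zero]
  · constructor
    · obtain ⟨v, hv, -⟩ := BMaux.exists_indep hinf ⊥ inferInstance n
      exact ⟨_, BMaux.mem_HmSet (BMaux.liftMap v) (BMaux.liftMap_inj hv)⟩
    · apply isPreconnected_of_forall_pair
      rintro P ⟨f, hf, hfiso⟩ Q ⟨g, hg, hgiso⟩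
      set W := LinearMap.range f ⊔ LinearMap.range g with hW
      haveI hWfd : FiniteDimensional ℝ W := Submodule.finiteDimensional_sup _ _
      obtain ⟨v, hv, hdisj⟩ := BMaux.exists_indep hinf W hWfd n
      set h := BMaux.liftMap v with hhdef
      have hh : Function.Injective h := BMaux.liftMap_inj hv
      have seg : ∀ (f' : (Fin n → ℝ) →ₗ[ℝ] X), Function.Injective f' →
          LinearMap.range f' ≤ W → ∀ t : ℝ, t ∈ Set.Icc (0:ℝ) 1 →
          Function.Injective ((1-t) • f' + t • h) := by
        intro f' hf' hr t ht
        have hker : ∀ c, ((1-t) • f' + t • h) c = 0 → c = 0 := by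
          intro c hc
          have hc' : (1-t) • f' c + t • h c = 0 := by
            simpa [LinearMap.add_apply, LinearMap.smul_apply] using hc
          have hz1 : (1-t) • f' c ∈ W :=
            W.smul_mem _ (hr (LinearMap.mem_range_self f' c))
          have hz2 : (1-t) • f' c ∈ Submodule.span ℝ (Set.range v) := by
            have heq : (1-t) • f' c = -(t • h c) := eq_neg_of_add_eq_zero_left hc'
            rw [heq]
            exact Submodule.neg_mem _
              (Submodule.smul_mem _ _ (BMaux.liftMap_mem_span v c))
          have hzero : (1-t) • f' c = 0 := hdisj _ hz2 hz1
          have hzero2 : t • h c = 0 := by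
            have h5 := hc'
            rw [hzero, zero_add] at h5
            exact h5
          rcases lt_or_eq_of_le ht.2 with h1 | h1
          · have h10 : (1:ℝ) - t ≠ 0 := by linarith
            have hfc : f' c = 0 := (smul_eq_zero.mp hzero).resolve_left h10
            exact hf' (by rw [hfc, map_zero])
          · have hhc : h c = 0 := by
              rw [h1, one_smul] at hzero2
              exact hzero2
            exact hh (by rw [hhc, map_zero])
        intro a b hab
        have h5 : ((1-t) • f' + t • h) (a - b) = 0 := by rw [map_sub, hab, sub_self]
        have h6 := hker _ h5
        rwa [sub_eq_zero] at h6
      obtain ⟨s₁, hs₁sub, hs₁f, hs₁h, hs₁conn⟩ :=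
        BMaux.path_lemma hn f h hf hh (seg f hf le_sup_left)
      obtain ⟨s₂, hs₂sub, hs₂g, hs₂h, hs₂conn⟩ :=
        BMaux.path_lemma hn g h hg hh (seg g hg le_sup_right)
      refine ⟨s₁ ∪ s₂, Set.union_subset hs₁sub hs₂sub, ?_, ?_,
        IsPreconnected.union _ hs₁h hs₂h hs₁conn hs₂conn⟩
      · left
        rw [BMaux.hmset_rep f hf hfiso]
        exact hs₁f
      · right
        rw [BMaux.hmset_rep g hg hgiso]
        exact hs₂g
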